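/- Let Z be a nonempty finite type, P : Z → Z → ℝ a row-stochastic matrix that is irreducible, and W ⊆ Z with at least two elements. Then the factor chain M/W is irreducible: for all a, b ∈ W there exists m ≥ 1 with (P̄^m)(a,b) > 0, where P̄ is the factor-chain transition matrix on W and P̄^m is its m-th matrix power. -/

import Mathlib

open scoped Classical

/-- Probability of a path `x = (x₀, …, x_m)` of length `m`:
`Prob(x) = ∏_{i=1}^m P(x_{i-1}, x_i)`. -/
def pathProb {Z : Type*} (P : Z → Z → ℝ) {m : ℕ} (x : Fin (m + 1) → Z) : ℝ :=
  ∏ i : Fin m, P (x i.castSucc) (x i.succ)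

/-- `P` is a row-stochastic matrix. -/
def RowStochastic {Z : Type*} [Fintype Z] (P : Z → Z → ℝ) : Prop :=
  (∀ a b, 0 ≤ P a b) ∧ ∀ a, ∑ b, P a b = 1

/-- The chain is irreducible: for all `a b` there is `m ≥ 1` with `(P^m)(a,b) > 0`. -/
def IsIrreducibleChain {Z : Type*} [Fintype Z] [DecidableEq Z] (P : Z → Z → ℝ) : Prop :=
  ∀ a b : Z, ∃ m : ℕ, 1 ≤ m ∧ 0 < (Matrix.of P ^ m) a b

/-- The probability `P(R^W_{a,b})` of the set of `W`-arrows from `a` to `b`: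
the sum over all lengths `m ≥ 1` of the probabilities of paths `x` of length `m`
with `x₀ = a`, `x_m = b`, and `x_i ∈ W → x_i = a` for every `i < m`. -/
noncomputable def arrowProb {Z : Type*} [Fintype Z] (P : Z → Z → ℝ) (W : Finset Z)
    (a b : Z) : ℝ :=
  ∑' m : ℕ, ∑ x ∈ Finset.univ.filter (fun x : Fin (m + 1 + 1) → Z =>
      x 0 = a ∧ x (Fin.last (m + 1)) = b ∧
      ∀ i : Fin (m + 1 + 1), i < Fin.last (m + 1) → x i ∈ W → x i = a),
    pathProb P x

/-- The transition matrix `P̄` of the factor chain `M/W`, a matrix indexed by the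
states of `W`: `P̄(a,b) = P(R^W_{a,b})` for `a ≠ b` and `P̄(a,a) = 0`. -/
noncomputable def factorMatrix {Z : Type*} [Fintype Z] (P : Z → Z → ℝ) (W : Finset Z) :
    Matrix {z : Z // z ∈ W} {z : Z // z ∈ W} ℝ :=
  Matrix.of fun a b => if (a : Z) = (b : Z) then 0 else arrowProb P W (a : Z) (b : Z)

/-! ### Auxiliary lemmas -/

lemma pathProb_nonneg {Z : Type*} (P : Z → Z → ℝ) (h0 : ∀ a b, 0 ≤ P a b) {m : ℕ}
    (x : Fin (m + 1) → Z) : 0 ≤ pathProb P x :=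
  Finset.prod_nonneg fun _ _ => h0 _ _

lemma pathProb_snoc {Z : Type*} (P : Z → Z → ℝ) {n : ℕ} (y : Fin (n + 1) → Z) (z : Z) :
    pathProb P (Fin.snoc y z) = pathProb P y * P (y (Fin.last n)) z := by
  unfold pathProb
  rw [Fin.prod_univ_castSucc]
  congr 1
  · exact Finset.prod_congr rfl fun i _ => by
      rw [Fin.succ_castSucc, Fin.snoc_castSucc, Fin.snoc_castSucc]
  · rw [Fin.snoc_castSucc, Fin.succ_last, Fin.snoc_last]

lemma pow_entry_nonneg {ι : Type*} [Fintype ι] [DecidableEq ι] (M : Matrix ι ι ℝ)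
    (h : ∀ i j, 0 ≤ M i j) : ∀ (m : ℕ) (i j : ι), 0 ≤ (M ^ m) i j := by
  intro m
  induction m with
  | zero => intro i j; rw [pow_zero, Matrix.one_apply]; split <;> norm_num
  | succ m ih =>
      intro i j
      rw [pow_succ, Matrix.mul_apply]
      exact Finset.sum_nonneg fun c _ => mul_nonneg (ih i c) (h c j)

lemma pow_pos_comp {ι : Type*} [Fintype ι] [DecidableEq ι] (M : Matrix ι ι ℝ)
    (h : ∀ i j, 0 ≤ M i j) {p q : ℕ} {a c b : ι}
    (hp : 0 < (M ^ p) a c) (hq : 0 < (M ^ q) c b) : 0 < (M ^ (p + q)) a b := by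
  rw [pow_add, Matrix.mul_apply]
  exact Finset.sum_pos'
    (fun i _ => mul_nonneg (pow_entry_nonneg M h p a i) (pow_entry_nonneg M h q i b))
    ⟨c, Finset.mem_univ c, mul_pos hp hq⟩

lemma exists_path {Z : Type*} [Fintype Z] [DecidableEq Z] (P : Z → Z → ℝ)
    (h0 : ∀ a b, 0 ≤ P a b) :
    ∀ (m : ℕ) (a b : Z), 0 < (Matrix.of P ^ m) a b →
      ∃ u : ℕ → Z, u 0 = a ∧ u m = b ∧ ∀ k, k < m → 0 < P (u k) (u (k + 1)) := by
  intro m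
  induction m with
  | zero =>
      intro a b h
      rw [pow_zero] at h
      have hab : a = b := by
        by_contra hne
        rw [Matrix.one_apply_ne hne] at h
        exact lt_irrefl 0 h
      exact ⟨fun _ => a, rfl, hab, fun k hk => absurd hk (Nat.not_lt_zero k)⟩
  | succ m ih =>
      intro a b h
      rw [pow_succ, Matrix.mul_apply] at h
      have : ∃ c ∈ Finset.univ, 0 < (Matrix.of P ^ m) a c * (Matrix.of P) c b := by
        by_contra hcon
        push_neg at hcon
        have : ∑ c, (Matrix.of P ^ m) a c * (Matrix.of P) c b ≤ 0 :=
          Finset.sum_nonpos fun c hc => hcon c hc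
        linarith
      obtain ⟨c, -, hc⟩ := this
      have h1 : 0 < (Matrix.of P ^ m) a c := by
        rcases mul_pos_iff.mp hc with ⟨h1, _⟩ | ⟨h1, h2⟩
        · exact h1
        · exact absurd (h0 c b) (not_le.mpr h2)
      have h2 : 0 < P c b := by
        rcases mul_pos_iff.mp hc with ⟨_, h2⟩ | ⟨h1', _⟩
        · exact h2
        · exact absurd (pow_entry_nonneg (Matrix.of P) h0 m a c) (not_le.mpr h1')
      obtain ⟨u, hu0, hum, hsteps⟩ := ih a c h1
      refine ⟨fun k => if k ≤ m then u k else b, by simp [hu0], by simp, ?_⟩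
      intro k hk
      by_cases hkm : k < m
      · have e1 : k ≤ m := le_of_lt hkm
        have e2 : k + 1 ≤ m := hkm
        simp only [if_pos e1, if_pos e2]
        exact hsteps k hkm
      · have hk' : k = m := by omega
        subst hk'
        simp only [le_refl, if_pos, if_neg (by omega : ¬ k + 1 ≤ k)]
        rw [hum]
        exact h2

section TF

variable {Z : Type*} [Fintype Z] (P : Z → Z → ℝ) (W : Finset Z) (a b : Z)

/-- Sum of the probabilities of the `W`-arrows from `a` to `b` of length exactly `n`. -/
noncomputable def Tb (n : ℕ) : ℝ :=
  ∑ x ∈ Finset.univ.filter (fun x : Fin (n + 1) → Z =>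
      x 0 = a ∧ x (Fin.last n) = b ∧
      ∀ i : Fin (n + 1), i < Fin.last n → x i ∈ W → x i = a),
    pathProb P x

/-- Sum of the probabilities of the length-`n` paths starting at `a` whose intermediate
`W`-visits are all equal to `a`. -/
noncomputable def Fs (n : ℕ) : ℝ :=
  ∑ x ∈ Finset.univ.filter (fun x : Fin (n + 1) → Z =>
      x 0 = a ∧ ∀ i : Fin (n + 1), i < Fin.last n → x i ∈ W → x i = a),
    pathProb P x

lemma arrowProb_eq : arrowProb P W a b = ∑' m : ℕ, Tb P W a b (m + 1) := rfl

lemma Tb_nonneg (h0 : ∀ a b, 0 ≤ P a b) (n : ℕ) : 0 ≤ Tb P W a b n :=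
  Finset.sum_nonneg fun x _ => pathProb_nonneg P h0 x

lemma Fs_nonneg (h0 : ∀ a b, 0 ≤ P a b) (n : ℕ) : 0 ≤ Fs P W a n :=
  Finset.sum_nonneg fun x _ => pathProb_nonneg P h0 x

lemma Fs_zero : Fs P W a 0 = 1 := by
  unfold Fs
  have hfil : (Finset.univ.filter (fun x : Fin 1 → Z =>
      x 0 = a ∧ ∀ i : Fin 1, i < Fin.last 0 → x i ∈ W → x i = a)) = {fun _ => a} := by
    ext x
    simp only [Finset.mem_filter, Finset.mem_univ, true_and, Finset.mem_singleton]
    constructor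
    · rintro ⟨h1, -⟩
      funext i
      have : i = 0 := Subsingleton.elim i 0
      rw [this, h1]
    · rintro rfl
      exact ⟨rfl, fun i hi => absurd hi (by simp [Fin.last])⟩
  rw [hfil, Finset.sum_singleton]
  unfold pathProb
  simp

lemma Fs_step (h0 : ∀ a b, 0 ≤ P a b) (h1 : ∀ c, ∑ d, P c d = 1)
    (hb : b ∈ W) (hba : b ≠ a) (n : ℕ) :
    Fs P W a (n + 1) + Tb P W a b n ≤ Fs P W a n := by
  set C' : (Fin (n + 1) → Z) → Prop :=
    fun y => y 0 = a ∧ ∀ i : Fin (n + 1), y i ∈ W → y i = a with hC'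
  set Cn : (Fin (n + 1) → Z) → Prop :=
    fun y => y 0 = a ∧ ∀ i : Fin (n + 1), i < Fin.last n → y i ∈ W → y i = a with hCn
  set CT : (Fin (n + 1) → Z) → Prop :=
    fun y => y 0 = a ∧ y (Fin.last n) = b ∧
      ∀ i : Fin (n + 1), i < Fin.last n → y i ∈ W → y i = a with hCT
  have hcond : ∀ (y : Fin (n + 1) → Z) (z : Z),
      ((Fin.snoc y z : Fin (n + 1 + 1) → Z) 0 = a ∧
        ∀ i : Fin (n + 1 + 1), i < Fin.last (n + 1) →
          (Fin.snoc y z : Fin (n + 1 + 1) → Z) i ∈ W →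
          (Fin.snoc y z : Fin (n + 1 + 1) → Z) i = a) ↔ C' y := by
    intro y z
    have e0 : (Fin.snoc y z : Fin (n + 1 + 1) → Z) 0 = y 0 := by
      rw [← Fin.castSucc_zero, Fin.snoc_castSucc]
    constructor
    · rintro ⟨ha0, hall⟩
      refine ⟨by rw [← e0]; exact ha0, fun i => ?_⟩
      have := hall i.castSucc (Fin.castSucc_lt_last i)
      rwa [Fin.snoc_castSucc] at this
    · rintro ⟨ha0, hall⟩
      refine ⟨by rw [e0]; exact ha0, fun i hi => ?_⟩
      obtain ⟨j, rfl⟩ : ∃ j : Fin (n + 1), j.castSucc = i :=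
        Fin.exists_castSucc_eq.mpr (ne_of_lt hi)
      rw [Fin.snoc_castSucc]
      exact hall j
  have key : Fs P W a (n + 1) = ∑ y ∈ Finset.univ.filter C', pathProb P y := by
    unfold Fs
    rw [Finset.sum_filter, Finset.sum_filter]
    rw [← Equiv.sum_comp (Fin.snocEquiv (fun _ : Fin (n + 1 + 1) => Z))
      (fun x : Fin (n + 1 + 1) → Z => if x 0 = a ∧ ∀ i : Fin (n + 1 + 1),
        i < Fin.last (n + 1) → x i ∈ W → x i = a then pathProb P x else 0)]
    rw [Fintype.sum_prod_type, Finset.sum_comm]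
    refine Finset.sum_congr rfl fun y _ => ?_
    have hterm : ∀ z : Z,
        (if (Fin.snoc y z : Fin (n + 1 + 1) → Z) 0 = a ∧ ∀ i : Fin (n + 1 + 1),
            i < Fin.last (n + 1) → (Fin.snoc y z : Fin (n + 1 + 1) → Z) i ∈ W →
            (Fin.snoc y z : Fin (n + 1 + 1) → Z) i = a
          then pathProb P (Fin.snoc y z) else 0)
        = (if C' y then pathProb P y * P (y (Fin.last n)) z else 0) := by
      intro z
      exact if_congr (hcond y z) (pathProb_snoc P y z) rfl
    calc (∑ z : Z, if (Fin.snocEquiv (fun _ : Fin (n + 1 + 1) => Z) (z, y)) 0 = a ∧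
            ∀ i : Fin (n + 1 + 1), i < Fin.last (n + 1) →
            (Fin.snocEquiv (fun _ : Fin (n + 1 + 1) => Z) (z, y)) i ∈ W →
            (Fin.snocEquiv (fun _ : Fin (n + 1 + 1) => Z) (z, y)) i = a
          then pathProb P (Fin.snocEquiv (fun _ : Fin (n + 1 + 1) => Z) (z, y)) else 0)
        = ∑ z : Z, if C' y then pathProb P y * P (y (Fin.last n)) z else 0 :=
          Finset.sum_congr rfl fun z _ => hterm z
      _ = if C' y then pathProb P y else 0 := by
          by_cases h : C' y
          · simp only [if_pos h, ← Finset.mul_sum, h1 (y (Fin.last n)), mul_one]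
          · simp [h]
  have hsub1 : Finset.univ.filter C' ⊆ Finset.univ.filter Cn := by
    intro y hy
    simp only [hC', hCn, Finset.mem_filter, Finset.mem_univ, true_and] at hy ⊢
    exact ⟨hy.1, fun i _ => hy.2 i⟩
  have hsub2 : Finset.univ.filter CT ⊆ Finset.univ.filter Cn := by
    intro y hy
    simp only [hCT, hCn, Finset.mem_filter, Finset.mem_univ, true_and] at hy ⊢
    exact ⟨hy.1, hy.2.2⟩
  have hdisj : Disjoint (Finset.univ.filter C') (Finset.univ.filter CT) := by
    rw [Finset.disjoint_left]
    intro y hy hy'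
    simp only [hC', hCT, Finset.mem_filter, Finset.mem_univ, true_and] at hy hy'
    have : y (Fin.last n) = a := hy.2 (Fin.last n) (hy'.2.1 ▸ hb)
    exact hba (hy'.2.1 ▸ this)
  calc Fs P W a (n + 1) + Tb P W a b n
      = ∑ y ∈ Finset.univ.filter C' ∪ Finset.univ.filter CT, pathProb P y := by
        rw [key]; unfold Tb; rw [Finset.sum_union hdisj]
    _ ≤ ∑ y ∈ Finset.univ.filter Cn, pathProb P y := by
        refine Finset.sum_le_sum_of_subset_of_nonneg ?_ (fun y _ _ => pathProb_nonneg P h0 y)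
        rw [Finset.union_subset_iff]
        exact ⟨hsub1, hsub2⟩
    _ = Fs P W a n := rfl

lemma Tb_partial (h0 : ∀ a b, 0 ≤ P a b) (h1 : ∀ c, ∑ d, P c d = 1)
    (hb : b ∈ W) (hba : b ≠ a) :
    ∀ N, Fs P W a N + ∑ n ∈ Finset.range N, Tb P W a b n ≤ 1 := by
  intro N
  induction N with
  | zero => simp [Fs_zero]
  | succ N ih =>
      rw [Finset.sum_range_succ]
      have := Fs_step P W a b h0 h1 hb hba N
      linarith

lemma Tb_summable (h0 : ∀ a b, 0 ≤ P a b) (h1 : ∀ c, ∑ d, P c d = 1)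
    (hb : b ∈ W) (hba : b ≠ a) :
    Summable (fun m => Tb P W a b (m + 1)) := by
  apply summable_of_sum_range_le (c := 1) (fun m => Tb_nonneg P W a b h0 (m + 1))
  intro N
  have hps := Tb_partial P W a b h0 h1 hb hba (N + 1)
  have hsr : ∑ n ∈ Finset.range (N + 1), Tb P W a b n
      = (∑ m ∈ Finset.range N, Tb P W a b (m + 1)) + Tb P W a b 0 :=
    Finset.sum_range_succ' _ N
  have := Fs_nonneg P W a h0 (N + 1)
  have := Tb_nonneg P W a b h0 0
  linarith

lemma Tb_le_arrowProb (h0 : ∀ a b, 0 ≤ P a b) (h1 : ∀ c, ∑ d, P c d = 1)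
    (hb : b ∈ W) (hba : b ≠ a) (m : ℕ) :
    Tb P W a b (m + 1) ≤ arrowProb P W a b := by
  rw [arrowProb_eq]
  exact Summable.le_tsum (Tb_summable P W a b h0 h1 hb hba) m
    (fun n _ => Tb_nonneg P W a b h0 (n + 1))

end TF

lemma factor_nonneg {Z : Type*} [Fintype Z] (P : Z → Z → ℝ) (h0 : ∀ a b, 0 ≤ P a b)
    (W : Finset Z) (i j : {z : Z // z ∈ W}) : 0 ≤ factorMatrix P W i j := by
  unfold factorMatrix
  rw [Matrix.of_apply]
  split
  · exact le_refl 0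
  · exact tsum_nonneg fun m => Finset.sum_nonneg fun x _ => pathProb_nonneg P h0 x

lemma main_lemma {Z : Type*} [Fintype Z] [DecidableEq Z] (P : Z → Z → ℝ)
    (hP : RowStochastic P) (W : Finset Z) :
    ∀ n : ℕ, ∀ u : ℕ → Z, (∀ k, k < n → 0 < P (u k) (u (k + 1))) →
      ∀ (ha : u 0 ∈ W) (hb : u n ∈ W), u 0 ≠ u n →
      ∃ m : ℕ, 1 ≤ m ∧ 0 < (factorMatrix P W ^ m) ⟨u 0, ha⟩ ⟨u n, hb⟩ := by
  obtain ⟨h0, h1⟩ := hP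
  intro n
  induction n using Nat.strong_induction_on with
  | _ n ih =>
  intro u hu ha hb hne
  rcases Nat.eq_zero_or_pos n with rfl | hn
  · exact absurd rfl hne
  have hex : ∃ i, 1 ≤ i ∧ i ≤ n ∧ u i ∈ W ∧ u i ≠ u 0 := ⟨n, hn, le_refl n, hb, hne.symm⟩
  obtain ⟨hi1, hin, hiW, hia⟩ := Nat.find_spec hex
  set i := Nat.find hex with hidef
  obtain ⟨m0, hm0⟩ : ∃ m0, i = m0 + 1 := ⟨i - 1, by omega⟩
  have harrow : 0 < arrowProb P W (u 0) (u i) := by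
    set x : Fin (m0 + 1 + 1) → Z := fun k => u k with hxdef
    have hxmem : x 0 = u 0 ∧ x (Fin.last (m0 + 1)) = u i ∧
        ∀ j : Fin (m0 + 1 + 1), j < Fin.last (m0 + 1) → x j ∈ W → x j = u 0 := by
      refine ⟨by simp [hxdef], ?_, ?_⟩
      · show u ((Fin.last (m0 + 1) : Fin (m0 + 1 + 1)) : ℕ) = u i
        rw [Fin.val_last, ← hm0]
      · intro j hj hjW
        have hjv : (j : ℕ) < i := by
          rw [Fin.lt_def, Fin.val_last] at hj
          omega
        rcases Nat.eq_zero_or_pos (j : ℕ) with hj0 | hjpos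
        · show u ((j : Fin (m0 + 1 + 1)) : ℕ) = u 0
          rw [hj0]
        · by_contra hne'
          exact (Nat.find_min hex (hidef ▸ hjv)) ⟨hjpos, by omega, hjW, hne'⟩
    have hpp : 0 < pathProb P x := by
      unfold pathProb
      apply Finset.prod_pos
      intro k _
      have hk : (k : ℕ) < n := by
        have := k.isLt
        omega
      have := hu (k : ℕ) hk
      simpa [hxdef, Fin.coe_castSucc, Fin.val_succ] using this
    have hTb : pathProb P x ≤ Tb P W (u 0) (u i) (m0 + 1) := by
      unfold Tb
      refine Finset.single_le_sum (fun y _ => pathProb_nonneg P h0 y) ?_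
      simp only [Finset.mem_filter, Finset.mem_univ, true_and]
      exact hxmem
    have hle := Tb_le_arrowProb P W (u 0) (u i) h0 h1 hiW hia m0
    linarith
  have hne' : ((⟨u 0, ha⟩ : {z : Z // z ∈ W}) : Z) ≠ ((⟨u i, hiW⟩ : {z : Z // z ∈ W}) : Z) :=
    fun h => hia h.symm
  have hfac : 0 < factorMatrix P W ⟨u 0, ha⟩ ⟨u i, hiW⟩ := by
    unfold factorMatrix
    rw [Matrix.of_apply, if_neg hne']
    exact harrow
  by_cases hib : u i = u n
  · refine ⟨1, le_refl 1, ?_⟩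
    rw [pow_one]
    have he : (⟨u i, hiW⟩ : {z : Z // z ∈ W}) = ⟨u n, hb⟩ := Subtype.ext hib
    rw [he] at hfac
    exact hfac
  · have hilt : i < n := lt_of_le_of_ne hin (fun h => hib (by rw [h]))
    have hlt : n - i < n := by omega
    set v : ℕ → Z := fun k => u (i + k) with hv
    have hstep' : ∀ k, k < n - i → 0 < P (v k) (v (k + 1)) := by
      intro k hk
      exact hu (i + k) (by omega)
    have hva : v 0 ∈ W := by
      show u (i + 0) ∈ W
      rw [Nat.add_zero]
      exact hiW
    have hvb : v (n - i) ∈ W := by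
      have e : i + (n - i) = n := by omega
      simp only [hv]
      rw [e]
      exact hb
    have hvne : v 0 ≠ v (n - i) := by
      have e : i + (n - i) = n := by omega
      simp only [hv]
      rw [e, Nat.add_zero]
      exact hib
    obtain ⟨m2, hm2, hpos2⟩ := ih (n - i) hlt v hstep' hva hvb hvne
    have e1 : (⟨v 0, hva⟩ : {z : Z // z ∈ W}) = ⟨u i, hiW⟩ :=
      Subtype.ext (by show u (i + 0) = u i; rw [Nat.add_zero])
    have e2 : (⟨v (n - i), hvb⟩ : {z : Z // z ∈ W}) = (⟨u n, hb⟩ : {z : Z // z ∈ W}) :=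
      Subtype.ext (by show u (i + (n - i)) = u n; congr 1; omega)
    rw [e1, e2] at hpos2
    have hp1 : 0 < (factorMatrix P W ^ 1) ⟨u 0, ha⟩ ⟨u i, hiW⟩ := by
      rw [pow_one]; exact hfac
    exact ⟨1 + m2, by omega,
      pow_pos_comp _ (fun i j => factor_nonneg P h0 W i j) hp1 hpos2⟩

theorem stmt_8 {Z : Type*} [Fintype Z] [Nonempty Z] [DecidableEq Z] (P : Z → Z → ℝ)
    (hP : RowStochastic P) (hirr : IsIrreducibleChain P)
    (W : Finset Z) (hW : 2 ≤ W.card) :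
    ∀ a b : {z : Z // z ∈ W}, ∃ m : ℕ, 1 ≤ m ∧ 0 < (factorMatrix P W ^ m) a b := by
  have pair : ∀ a b : {z : Z // z ∈ W}, (a : Z) ≠ (b : Z) →
      ∃ m : ℕ, 1 ≤ m ∧ 0 < (factorMatrix P W ^ m) a b := by
    intro a b hab
    obtain ⟨mm, -, hpos⟩ := hirr (a : Z) (b : Z)
    obtain ⟨u, hu0, hum, hsteps⟩ := exists_path P hP.1 mm (a : Z) (b : Z) hpos
    have ha' : u 0 ∈ W := by rw [hu0]; exact a.2
    have hb' : u mm ∈ W := by rw [hum]; exact b.2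
    have hne : u 0 ≠ u mm := by rw [hu0, hum]; exact hab
    obtain ⟨m, hm, h⟩ := main_lemma P hP W mm u hsteps ha' hb' hne
    have e1 : (⟨u 0, ha'⟩ : {z : Z // z ∈ W}) = a := Subtype.ext hu0
    have e2 : (⟨u mm, hb'⟩ : {z : Z // z ∈ W}) = b := Subtype.ext hum
    rw [e1, e2] at h
    exact ⟨m, hm, h⟩
  intro a b
  by_cases hab : (a : Z) = (b : Z)
  · have hab' : a = b := Subtype.ext hab
    subst hab'
    obtain ⟨c, hcW, hca⟩ := Finset.exists_mem_ne (s := W) (by omega) (a : Z)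
    obtain ⟨m1, hm1, hp1⟩ := pair a ⟨c, hcW⟩ (fun h => hca h.symm)
    obtain ⟨m2, hm2, hp2⟩ := pair ⟨c, hcW⟩ a hca
    exact ⟨m1 + m2, by omega,
      pow_pos_comp _ (fun i j => factor_nonneg P hP.1 W i j) hp1 hp2⟩
  · exact pair a b hab
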